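/- Let $X$ be an INAR(1) process with parameter $1 - h/n^2$, $h \ge 0$, $X_0 = 0$, innovations with pmf $g$, mean $\mu_G$, and finite variance. Then the estimator $\hat{g}_n(0) = \frac{1}{n} \sum_{t=1}^n \mathbf{1}\{X_t = X_{t-1}\}$ converges in probability to $g(0)$ under $\mathbb{P}_{1-h/n^2}$ as $n \to \infty$. -/

import Mathlib

open MeasureTheory ProbabilityTheory Filter Finset
open scoped ENNReal NNReal

/-- An INAR(1) process with autoregression parameter `θ` and innovation
distribution `G` on `ℕ`, defined on the probability space `(Ω, P)`:
`X 0 = 0` and `X (t+1) = θ ∘ X t + ε (t+1)`, where the binomial thinning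
`θ ∘ X t` is the sum of `X t` i.i.d. Bernoulli(θ) variables `Z (t+1) j`,
all thinning variables and innovations being jointly independent. -/
structure INAR {Ω : Type} [MeasurableSpace Ω] (P : Measure Ω)
    (θ : ℝ) (G : PMF ℕ) where
  Z : ℕ → ℕ → Ω → ℕ
  ε : ℕ → Ω → ℕ
  X : ℕ → Ω → ℕ
  hZmeas : ∀ t j, Measurable (Z t j)
  hεmeas : ∀ t, Measurable (ε t)
  hZle : ∀ t j ω, Z t j ω ≤ 1
  hZdist : ∀ t j, P {ω | Z t j ω = 1} = ENNReal.ofReal θ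
  hεdist : ∀ t k, P {ω | ε t ω = k} = G k
  hIndep : iIndepFun
      (Sum.elim (fun p : ℕ × ℕ => Z p.1 p.2) ε) P
  hX0 : ∀ ω, X 0 ω = 0
  hXrec : ∀ t ω, X (t + 1) ω =
      (∑ j ∈ Finset.range (X t ω), Z (t + 1) j ω) + ε (t + 1) ω

namespace INARAux

lemma tsum_ite_lt (m : ℕ) (a : ℕ → ℝ≥0∞) :
    ∑' j : ℕ, (if j < m then a j else 0) = ∑ j ∈ Finset.range m, a j := by
  rw [tsum_eq_sum (s := Finset.range m)
    (fun j hj => by simp only [Finset.mem_range] at hj; simp [hj])]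
  exact Finset.sum_congr rfl fun j hj => by simp [Finset.mem_range.mp hj]

lemma measurable_apply_nat {α : Type*} {m' : MeasurableSpace α} {Y : α → ℕ}
    (hY : Measurable[m'] Y) {g : ℕ → α → ℕ} (hg : ∀ k, Measurable[m'] (g k)) :
    Measurable[m'] fun ω => g (Y ω) ω := by
  letI := m'
  exact (measurable_from_prod_countable_left (f := fun q : α × ℕ => g q.2 q.1) hg).comp
    (measurable_id.prodMk hY)

lemma one_sub_ofReal_le {a : ℝ} (ha : 0 ≤ a) :
    (1 : ℝ≥0∞) - ENNReal.ofReal (1 - a) ≤ ENNReal.ofReal a := by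
  rcases le_total a 1 with h1 | h1
  · rw [ENNReal.ofReal_sub _ ha, ENNReal.ofReal_one,
      ENNReal.sub_sub_cancel ENNReal.one_ne_top (ENNReal.ofReal_le_one.mpr h1)]
  · exact le_trans tsub_le_self (ENNReal.one_le_ofReal.mpr h1)

variable {Ω : Type} [MeasurableSpace Ω] {P : Measure Ω} {θ : ℝ} {G : PMF ℕ}

/-- The whole family of driving random variables. -/
def Fam (M : INAR P θ G) : (ℕ × ℕ) ⊕ ℕ → Ω → ℕ :=
  Sum.elim (fun p : ℕ × ℕ => M.Z p.1 p.2) M.ε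

lemma measurable_Fam (M : INAR P θ G) (i : (ℕ × ℕ) ⊕ ℕ) : Measurable (Fam M i) := by
  cases i with
  | inl p => exact M.hZmeas p.1 p.2
  | inr s => exact M.hεmeas s

/-- Indices of driving variables used up to time `t`. -/
def Tset (t : ℕ) : Set ((ℕ × ℕ) ⊕ ℕ) :=
  {i | Sum.elim (fun p : ℕ × ℕ => p.1 ≤ t) (fun s => s ≤ t) i}

/-- The σ-algebra of the past up to time `t`. -/
def Galg (M : INAR P θ G) (t : ℕ) : MeasurableSpace Ω :=
  ⨆ i ∈ Tset t, MeasurableSpace.comap (Fam M i) inferInstance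

lemma Galg_le (M : INAR P θ G) (t : ℕ) : Galg M t ≤ ‹MeasurableSpace Ω› :=
  iSup₂_le fun i _ => measurable_iff_comap_le.mp (measurable_Fam M i)

lemma comap_le_Galg (M : INAR P θ G) {t : ℕ} {i : (ℕ × ℕ) ⊕ ℕ} (hi : i ∈ Tset t) :
    MeasurableSpace.comap (Fam M i) inferInstance ≤ Galg M t :=
  le_biSup (fun i => MeasurableSpace.comap (Fam M i) inferInstance) hi

lemma measurable_Galg_X (M : INAR P θ G) (t : ℕ) : Measurable[Galg M t] (M.X t) := by
  induction t with
  | zero =>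
    have hX : M.X 0 = fun _ => 0 := funext M.hX0
    rw [hX]; exact measurable_const
  | succ t ih =>
    have hmono : Galg M t ≤ Galg M (t + 1) := by
      refine biSup_mono ?_
      rintro (⟨s, j⟩ | s) hi <;> exact le_trans hi (Nat.le_succ t)
    have hZ : ∀ j, Measurable[Galg M (t + 1)] (M.Z (t + 1) j) := fun j =>
      measurable_iff_comap_le.mpr
        (comap_le_Galg M (i := Sum.inl (t + 1, j)) (le_refl (t + 1)))
    have hε : Measurable[Galg M (t + 1)] (M.ε (t + 1)) :=
      measurable_iff_comap_le.mpr
        (comap_le_Galg M (i := Sum.inr (t + 1)) (le_refl (t + 1)))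
    have hXfun : M.X (t + 1) = fun ω =>
        (fun k ω' => (∑ j ∈ Finset.range k, M.Z (t + 1) j ω') + M.ε (t + 1) ω')
          (M.X t ω) ω :=
      funext fun ω => M.hXrec t ω
    rw [hXfun]
    exact measurable_apply_nat (ih.mono hmono le_rfl)
      (fun k => (Finset.measurable_sum _ fun j _ => hZ j).add hε)

lemma measurable_X (M : INAR P θ G) (t : ℕ) : Measurable (M.X t) :=
  (measurable_Galg_X M t).mono (Galg_le M t) le_rfl

lemma indepFun_X_Z (M : INAR P θ G) (t j : ℕ) :
    IndepFun (M.X t) (M.Z (t + 1) j) P := by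
  have hInd : iIndep (fun i => MeasurableSpace.comap (Fam M i) inferInstance) P :=
    M.hIndep.iIndep
  have h0 := indep_biSup_compl
    (fun i => measurable_iff_comap_le.mp (measurable_Fam M i)) hInd (Tset t)
  have h1 := indep_of_indep_of_le_left h0
    (measurable_iff_comap_le.mp (measurable_Galg_X M t))
  have hmem : Sum.inl (t + 1, j) ∈ (Tset t)ᶜ := by
    simp only [Tset, Set.mem_compl_iff, Set.mem_setOf_eq, Sum.elim_inl]
    omega
  have h2 := indep_of_indep_of_le_right h1
    (le_biSup (fun i => MeasurableSpace.comap (Fam M i) inferInstance) hmem)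
  exact h2

/-- The number of deaths in the transition from time `t` to `t+1`. -/
def Dfun (M : INAR P θ G) (t : ℕ) (ω : Ω) : ℕ :=
  ∑ j ∈ Finset.range (M.X t ω), (1 - M.Z (t + 1) j ω)

lemma measurable_Dfun (M : INAR P θ G) (t : ℕ) : Measurable (Dfun M t) :=
  measurable_apply_nat (measurable_X M t)
    (fun k => Finset.measurable_sum _ fun j _ =>
      (measurable_from_top (f := fun m : ℕ => 1 - m)).comp (M.hZmeas (t + 1) j))

lemma D_eq_zero_step (M : INAR P θ G) (t : ℕ) (ω : Ω) (hD : Dfun M t ω = 0) :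
    M.X (t + 1) ω = M.X t ω + M.ε (t + 1) ω := by
  rw [M.hXrec t ω]
  congr 1
  have h1 : ∀ j ∈ Finset.range (M.X t ω), 1 - M.Z (t + 1) j ω = 0 :=
    Finset.sum_eq_zero_iff.mp hD
  have h2 : ∀ j ∈ Finset.range (M.X t ω), M.Z (t + 1) j ω = 1 := fun j hj => by
    have := h1 j hj; have := M.hZle (t + 1) j ω; omega
  rw [Finset.sum_congr rfl h2, Finset.sum_const, smul_eq_mul, mul_one, Finset.card_range]

lemma abs_ind_le (M : INAR P θ G) (t : ℕ) (ω : Ω) :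
    |(if M.X (t + 1) ω = M.X t ω then (1 : ℝ) else 0) -
      (if M.ε (t + 1) ω = 0 then (1 : ℝ) else 0)| ≤ (Dfun M t ω : ℝ) := by
  rcases Nat.eq_zero_or_pos (Dfun M t ω) with hD | hD
  · have hstep := D_eq_zero_step M t ω hD
    have heq : (if M.X (t + 1) ω = M.X t ω then (1 : ℝ) else 0)
        = (if M.ε (t + 1) ω = 0 then (1 : ℝ) else 0) := by
      by_cases hε : M.ε (t + 1) ω = 0
      · rw [if_pos hε, if_pos (by omega : M.X (t + 1) ω = M.X t ω)]
      · rw [if_neg hε, if_neg (by omega : ¬ M.X (t + 1) ω = M.X t ω)]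
    rw [hD, heq, Nat.cast_zero, sub_self, abs_zero]
  · have h1 : (1 : ℝ) ≤ (Dfun M t ω : ℝ) := by exact_mod_cast hD
    have h2 : |(if M.X (t + 1) ω = M.X t ω then (1 : ℝ) else 0) -
        (if M.ε (t + 1) ω = 0 then (1 : ℝ) else 0)| ≤ 1 := by
      split_ifs <;> norm_num
    linarith

lemma PZ0 (M : INAR P θ G) [IsProbabilityMeasure P] (t j : ℕ) :
    P {ω | M.Z t j ω = 0} = 1 - ENNReal.ofReal θ := by
  have hset : {ω | M.Z t j ω = 0} = {ω | M.Z t j ω = 1}ᶜ := by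
    ext ω
    have := M.hZle t j ω
    simp only [Set.mem_setOf_eq, Set.mem_compl_iff]
    omega
  have hms : MeasurableSet {ω | M.Z t j ω = 1} :=
    M.hZmeas t j (MeasurableSet.of_discrete (s := {1}))
  rw [hset, prob_compl_eq_one_sub hms, M.hZdist t j]

lemma lintegral_nat {f : Ω → ℕ} (hf : Measurable f) :
    ∫⁻ ω, (f ω : ℝ≥0∞) ∂P = ∑' j : ℕ, P {ω | j < f ω} := by
  have hms : ∀ j : ℕ, MeasurableSet {ω | j < f ω} := fun j =>
    hf (MeasurableSet.of_discrete (s := {k | j < k}))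
  have hpt : ∀ ω, (f ω : ℝ≥0∞)
      = ∑' j : ℕ, Set.indicator {ω' | j < f ω'} (fun _ => 1) ω := by
    intro ω
    have h1 : ∀ j : ℕ, Set.indicator {ω' | j < f ω'} (fun _ => (1 : ℝ≥0∞)) ω
        = if j < f ω then 1 else 0 := by
      intro j
      by_cases hj : j < f ω
      · simp [Set.indicator_apply, Set.mem_setOf_eq, hj]
      · simp [Set.indicator_apply, Set.mem_setOf_eq, hj]
    rw [tsum_congr h1, tsum_ite_lt (f ω) (fun _ => 1)]
    simp
  calc ∫⁻ ω, (f ω : ℝ≥0∞) ∂P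
      = ∫⁻ ω, ∑' j : ℕ, Set.indicator {ω' | j < f ω'} (fun _ => 1) ω ∂P :=
        lintegral_congr hpt
    _ = ∑' j : ℕ, ∫⁻ ω, Set.indicator {ω' | j < f ω'} (fun _ => 1) ω ∂P :=
        lintegral_tsum fun j => (measurable_const.indicator (hms j)).aemeasurable
    _ = ∑' j : ℕ, P {ω | j < f ω} := tsum_congr fun j => lintegral_indicator_one (hms j)

lemma lintegral_eps (M : INAR P θ G) (t : ℕ) :
    ∫⁻ ω, (M.ε t ω : ℝ≥0∞) ∂P = ∑' k : ℕ, (k : ℝ≥0∞) * G k := by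
  rw [← lintegral_map (f := fun k : ℕ => (k : ℝ≥0∞))
      measurable_from_top (M.hεmeas t), lintegral_countable']
  refine tsum_congr fun k => ?_
  rw [Measure.map_apply (M.hεmeas t) (MeasurableSet.of_discrete (s := ({k} : Set ℕ)))]
  have hset : M.ε t ⁻¹' {k} = {ω | M.ε t ω = k} := rfl
  rw [hset, M.hεdist t k]

lemma lintegral_X_le (M : INAR P θ G) (t : ℕ) :
    ∫⁻ ω, (M.X t ω : ℝ≥0∞) ∂P ≤ (t : ℝ≥0∞) * ∑' k : ℕ, (k : ℝ≥0∞) * G k := by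
  induction t with
  | zero => simp [M.hX0]
  | succ t ih =>
    have hpt : ∀ ω, (M.X (t + 1) ω : ℝ≥0∞)
        ≤ (M.X t ω : ℝ≥0∞) + (M.ε (t + 1) ω : ℝ≥0∞) := by
      intro ω
      rw [M.hXrec t ω]
      have hsum : (∑ j ∈ Finset.range (M.X t ω), M.Z (t + 1) j ω) ≤ M.X t ω := by
        calc ∑ j ∈ Finset.range (M.X t ω), M.Z (t + 1) j ω
            ≤ ∑ _j ∈ Finset.range (M.X t ω), 1 :=
              Finset.sum_le_sum fun j _ => M.hZle (t + 1) j ω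
          _ = M.X t ω := by simp
      have h2 : ((∑ j ∈ Finset.range (M.X t ω), M.Z (t + 1) j ω) + M.ε (t + 1) ω : ℕ)
          ≤ M.X t ω + M.ε (t + 1) ω := by omega
      calc (((∑ j ∈ Finset.range (M.X t ω), M.Z (t + 1) j ω) + M.ε (t + 1) ω : ℕ) : ℝ≥0∞)
          ≤ ((M.X t ω + M.ε (t + 1) ω : ℕ) : ℝ≥0∞) := by exact_mod_cast Nat.cast_le.mpr h2
        _ = (M.X t ω : ℝ≥0∞) + (M.ε (t + 1) ω : ℝ≥0∞) := by push_cast; rfl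
    calc ∫⁻ ω, (M.X (t + 1) ω : ℝ≥0∞) ∂P
        ≤ ∫⁻ ω, ((M.X t ω : ℝ≥0∞) + (M.ε (t + 1) ω : ℝ≥0∞)) ∂P := lintegral_mono hpt
      _ = (∫⁻ ω, (M.X t ω : ℝ≥0∞) ∂P) + ∫⁻ ω, (M.ε (t + 1) ω : ℝ≥0∞) ∂P :=
          lintegral_add_left ((measurable_from_top (f := fun m : ℕ => (m : ℝ≥0∞))).comp
            (measurable_X M t)) _
      _ ≤ (t : ℝ≥0∞) * (∑' k : ℕ, (k : ℝ≥0∞) * G k) + ∑' k : ℕ, (k : ℝ≥0∞) * G k :=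
          add_le_add ih (le_of_eq (lintegral_eps M (t + 1)))
      _ = ((t + 1 : ℕ) : ℝ≥0∞) * ∑' k : ℕ, (k : ℝ≥0∞) * G k := by
          push_cast; ring

lemma lintegral_D_le (M : INAR P θ G) [IsProbabilityMeasure P] (t : ℕ) :
    ∫⁻ ω, (Dfun M t ω : ℝ≥0∞) ∂P
      ≤ (1 - ENNReal.ofReal θ) * ((t : ℝ≥0∞) * ∑' k : ℕ, (k : ℝ≥0∞) * G k) := by
  have hmsX : ∀ j : ℕ, MeasurableSet {ω | j < M.X t ω} := fun j =>
    measurable_X M t (MeasurableSet.of_discrete (s := {k | j < k}))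
  have hmsZ : ∀ j : ℕ, MeasurableSet {ω | M.Z (t + 1) j ω = 0} := fun j =>
    M.hZmeas (t + 1) j (MeasurableSet.of_discrete (s := {0}))
  have hpt : ∀ ω, (Dfun M t ω : ℝ≥0∞)
      = ∑' j : ℕ, Set.indicator ({ω' | j < M.X t ω'} ∩ {ω' | M.Z (t + 1) j ω' = 0})
          (fun _ => 1) ω := by
    intro ω
    rw [Dfun, Nat.cast_sum,
      ← tsum_ite_lt (M.X t ω) (fun j => ((1 - M.Z (t + 1) j ω : ℕ) : ℝ≥0∞))]
    refine (tsum_congr fun j => ?_).symm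
    by_cases hj : j < M.X t ω
    · rw [if_pos hj]
      by_cases hz : M.Z (t + 1) j ω = 0
      · have hmem : ω ∈ {ω' | j < M.X t ω'} ∩ {ω' | M.Z (t + 1) j ω' = 0} := ⟨hj, hz⟩
        rw [Set.indicator_of_mem hmem, hz]
        norm_num
      · have hz1 : M.Z (t + 1) j ω = 1 := by have := M.hZle (t + 1) j ω; omega
        have hmem : ω ∉ {ω' | j < M.X t ω'} ∩ {ω' | M.Z (t + 1) j ω' = 0} :=
          fun hc => hz hc.2
        rw [Set.indicator_of_notMem hmem, hz1]
        norm_num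
    · rw [if_neg hj]
      have hmem : ω ∉ {ω' | j < M.X t ω'} ∩ {ω' | M.Z (t + 1) j ω' = 0} :=
        fun hc => hj hc.1
      rw [Set.indicator_of_notMem hmem]
  calc ∫⁻ ω, (Dfun M t ω : ℝ≥0∞) ∂P
      = ∑' j : ℕ, P ({ω' | j < M.X t ω'} ∩ {ω' | M.Z (t + 1) j ω' = 0}) := by
        rw [lintegral_congr hpt,
          lintegral_tsum fun j =>
            (measurable_const.indicator ((hmsX j).inter (hmsZ j))).aemeasurable]
        exact tsum_congr fun j => lintegral_indicator_one ((hmsX j).inter (hmsZ j))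
    _ = ∑' j : ℕ, P {ω' | j < M.X t ω'} * P {ω' | M.Z (t + 1) j ω' = 0} :=
        tsum_congr fun j =>
          (indepFun_X_Z M t j).measure_inter_preimage_eq_mul
            {k | j < k} {0} MeasurableSet.of_discrete MeasurableSet.of_discrete
    _ = ∑' j : ℕ, P {ω' | j < M.X t ω'} * (1 - ENNReal.ofReal θ) :=
        tsum_congr fun j => by rw [PZ0 M (t + 1) j]
    _ = (∑' j : ℕ, P {ω' | j < M.X t ω'}) * (1 - ENNReal.ofReal θ) :=
        ENNReal.tsum_mul_right
    _ = (1 - ENNReal.ofReal θ) * ∫⁻ ω, (M.X t ω : ℝ≥0∞) ∂P := by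
        rw [← lintegral_nat (measurable_X M t), mul_comm]
    _ ≤ (1 - ENNReal.ofReal θ) * ((t : ℝ≥0∞) * ∑' k : ℕ, (k : ℝ≥0∞) * G k) :=
        mul_le_mul_right (lintegral_X_le M t) _

/-- The indicator of the event that the innovation at time `t` vanishes. -/
def Yf (M : INAR P θ G) (t : ℕ) (ω : Ω) : ℝ := if M.ε t ω = 0 then 1 else 0

lemma Yf_indicator (M : INAR P θ G) (t : ℕ) :
    Yf M t = Set.indicator {ω | M.ε t ω = 0} (fun _ => (1 : ℝ)) := by
  funext ω
  by_cases hε : M.ε t ω = 0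
  · simp [Yf, Set.indicator_apply, Set.mem_setOf_eq, hε]
  · simp [Yf, Set.indicator_apply, Set.mem_setOf_eq, hε]

lemma meas_eps0 (M : INAR P θ G) (t : ℕ) : MeasurableSet {ω | M.ε t ω = 0} :=
  M.hεmeas t (MeasurableSet.of_discrete (s := {0}))

lemma Yf_memℒp (M : INAR P θ G) [IsProbabilityMeasure P] (t : ℕ) :
    MemLp (Yf M t) 2 P := by
  refine MemLp.of_bound ?_ 1 (Filter.Eventually.of_forall fun ω => ?_)
  · rw [Yf_indicator]
    exact (measurable_const.indicator (meas_eps0 M t)).aestronglyMeasurable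
  · rw [Yf]; split_ifs <;> simp

lemma Yf_integral (M : INAR P θ G) [IsProbabilityMeasure P] (t : ℕ) :
    ∫ ω, Yf M t ω ∂P = (G 0).toReal := by
  rw [show (fun ω => Yf M t ω) = Yf M t from rfl, Yf_indicator,
    integral_indicator_const (1 : ℝ) (meas_eps0 M t), measureReal_def, M.hεdist t 0, smul_eq_mul, mul_one]

lemma Yf_indepFun (M : INAR P θ G) {s t : ℕ} (hst : s ≠ t) :
    IndepFun (Yf M s) (Yf M t) P := by
  have h1 : IndepFun (M.ε s) (M.ε t) P :=
    M.hIndep.indepFun (show (Sum.inr s : (ℕ × ℕ) ⊕ ℕ) ≠ Sum.inr t by simpa using hst)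
  have h2 := h1.comp (φ := fun k : ℕ => if k = 0 then (1 : ℝ) else 0)
    (ψ := fun k : ℕ => if k = 0 then (1 : ℝ) else 0)
    measurable_from_top measurable_from_top
  exact h2

lemma Yf_variance_le (M : INAR P θ G) [IsProbabilityMeasure P] (t : ℕ) :
    variance (Yf M t) P ≤ 1 := by
  have hsq : (Yf M t) ^ 2 = Yf M t := by
    funext ω
    simp only [Pi.pow_apply, Yf]
    split_ifs <;> norm_num
  rw [variance_eq_sub (Yf_memℒp M t), hsq, Yf_integral M t]
  have h0 : (0 : ℝ) ≤ (G 0).toReal := ENNReal.toReal_nonneg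
  have h1 : (G 0).toReal ≤ 1 := by
    have := ENNReal.toReal_mono ENNReal.one_ne_top (G.coe_le_one 0)
    simpa using this
  nlinarith

/-- The key quantitative estimate for a single `n`. -/
lemma main_bound {P : Measure Ω} [IsProbabilityMeasure P] {θ : ℝ}
    (M : INAR P θ G) {μG : ℝ}
    (hμ : HasSum (fun k : ℕ => (k : ℝ) * (G k).toReal) μG)
    {n : ℕ} (hn : 1 ≤ n) {δ : ℝ} (hδ : 0 < δ)
    {a : ℝ} (ha0 : 0 ≤ a) (ha : (1 : ℝ≥0∞) - ENNReal.ofReal θ ≤ ENNReal.ofReal a) :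
    (P {ω | δ ≤ |(1 / (n : ℝ)) * (∑ t ∈ Finset.Icc 1 n,
        if M.X t ω = M.X (t - 1) ω then (1 : ℝ) else 0) - (G 0).toReal|}).toReal
      ≤ (n : ℝ) / ((n : ℝ) * δ / 2) ^ 2
        + (n : ℝ) * (a * ((n : ℝ) * μG)) / ((n : ℝ) * δ / 2) := by
  have hnpos : (0 : ℝ) < n := by exact_mod_cast hn
  have hcpos : (0 : ℝ) < (n : ℝ) * δ / 2 := by positivity
  have hμG0 : 0 ≤ μG := hμ.nonneg fun k =>
    mul_nonneg (Nat.cast_nonneg k) ENNReal.toReal_nonneg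
  -- mean of the sum of indicators
  have hSint : P[∑ t ∈ Finset.Icc 1 n, Yf M t] = (n : ℝ) * (G 0).toReal := by
    show ∫ ω, (∑ t ∈ Finset.Icc 1 n, Yf M t) ω ∂P = _
    simp only [Finset.sum_apply]
    rw [integral_finset_sum _ (fun t _ => (Yf_memℒp M t).integrable one_le_two)]
    simp only [Yf_integral]
    rw [Finset.sum_const, Nat.card_Icc]
    simp [nsmul_eq_mul]
  -- variance bound
  have hvar : variance (∑ t ∈ Finset.Icc 1 n, Yf M t) P ≤ (n : ℝ) := by
    rw [IndepFun.variance_sum (fun t _ => Yf_memℒp M t)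
      (fun s _ t _ hst => Yf_indepFun M hst)]
    calc ∑ t ∈ Finset.Icc 1 n, variance (Yf M t) P
        ≤ ∑ _t ∈ Finset.Icc 1 n, (1 : ℝ) :=
          Finset.sum_le_sum fun t _ => Yf_variance_le M t
      _ = (n : ℝ) := by rw [Finset.sum_const, Nat.card_Icc]; simp
  -- Chebyshev
  have hcheb : P {ω | (n : ℝ) * δ / 2 ≤
        |(∑ t ∈ Finset.Icc 1 n, Yf M t) ω - P[∑ t ∈ Finset.Icc 1 n, Yf M t]|}
      ≤ ENNReal.ofReal ((n : ℝ) / ((n : ℝ) * δ / 2) ^ 2) := by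
    refine (meas_ge_le_variance_div_sq (memLp_finset_sum' _ fun t _ => Yf_memℒp M t)
      hcpos).trans (ENNReal.ofReal_le_ofReal ?_)
    gcongr
  -- Markov for the deaths
  have hDmeas : ∀ t : ℕ, Measurable fun ω => ((Dfun M (t - 1) ω : ℕ) : ℝ≥0∞) := fun t =>
    (measurable_from_top (f := fun m : ℕ => (m : ℝ≥0∞))).comp (measurable_Dfun M (t - 1))
  have hμ' : (∑' k : ℕ, (k : ℝ≥0∞) * G k) = ENNReal.ofReal μG := by
    rw [← hμ.tsum_eq, ENNReal.ofReal_tsum_of_nonneg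
      (fun k => mul_nonneg (Nat.cast_nonneg k) ENNReal.toReal_nonneg) hμ.summable]
    refine tsum_congr fun k => ?_
    rw [ENNReal.ofReal_mul (Nat.cast_nonneg k), ENNReal.ofReal_natCast,
      ENNReal.ofReal_toReal (G.apply_lt_top k).ne]
  have hmark : P {ω | ENNReal.ofReal ((n : ℝ) * δ / 2)
        ≤ ∑ t ∈ Finset.Icc 1 n, ((Dfun M (t - 1) ω : ℕ) : ℝ≥0∞)}
      ≤ ENNReal.ofReal ((n : ℝ) * (a * ((n : ℝ) * μG)) / ((n : ℝ) * δ / 2)) := by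
    have hms : AEMeasurable
        (fun ω => ∑ t ∈ Finset.Icc 1 n, ((Dfun M (t - 1) ω : ℕ) : ℝ≥0∞)) P :=
      (Finset.measurable_sum _ fun t _ => hDmeas t).aemeasurable
    refine (meas_ge_le_lintegral_div hms
      (ENNReal.ofReal_pos.mpr hcpos).ne' ENNReal.ofReal_ne_top).trans ?_
    have hlint : ∫⁻ ω, ∑ t ∈ Finset.Icc 1 n, ((Dfun M (t - 1) ω : ℕ) : ℝ≥0∞) ∂P
        ≤ ENNReal.ofReal ((n : ℝ) * (a * ((n : ℝ) * μG))) := by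
      rw [lintegral_finset_sum _ fun t _ => hDmeas t]
      have hterm : ∀ t ∈ Finset.Icc 1 n,
          ∫⁻ ω, ((Dfun M (t - 1) ω : ℕ) : ℝ≥0∞) ∂P
            ≤ ENNReal.ofReal a * (ENNReal.ofReal (n : ℝ) * ENNReal.ofReal μG) := by
        intro t ht
        refine (lintegral_D_le M (t - 1)).trans ?_
        rw [hμ']
        refine mul_le_mul' ha (mul_le_mul' ?_ le_rfl)
        rw [ENNReal.ofReal_natCast]
        exact_mod_cast Nat.cast_le.mpr (show t - 1 ≤ n by
          simp only [Finset.mem_Icc] at ht; omega)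
      calc ∑ t ∈ Finset.Icc 1 n, ∫⁻ ω, ((Dfun M (t - 1) ω : ℕ) : ℝ≥0∞) ∂P
          ≤ ∑ _t ∈ Finset.Icc 1 n,
              ENNReal.ofReal a * (ENNReal.ofReal (n : ℝ) * ENNReal.ofReal μG) :=
            Finset.sum_le_sum hterm
        _ = (n : ℝ≥0∞) * (ENNReal.ofReal a * (ENNReal.ofReal (n : ℝ) * ENNReal.ofReal μG)) := by
            rw [Finset.sum_const, Nat.card_Icc]
            simp [nsmul_eq_mul]
        _ = ENNReal.ofReal ((n : ℝ) * (a * ((n : ℝ) * μG))) := by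
            rw [ENNReal.ofReal_mul (by positivity), ENNReal.ofReal_mul ha0,
              ENNReal.ofReal_mul (by positivity), ENNReal.ofReal_natCast]
    refine (ENNReal.div_le_div_right hlint _).trans ?_
    rw [ENNReal.ofReal_div_of_pos hcpos]
  -- event inclusion
  have hincl : {ω | δ ≤ |(1 / (n : ℝ)) * (∑ t ∈ Finset.Icc 1 n,
        if M.X t ω = M.X (t - 1) ω then (1 : ℝ) else 0) - (G 0).toReal|}
      ⊆ {ω | (n : ℝ) * δ / 2 ≤
          |(∑ t ∈ Finset.Icc 1 n, Yf M t) ω - P[∑ t ∈ Finset.Icc 1 n, Yf M t]|}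
        ∪ {ω | ENNReal.ofReal ((n : ℝ) * δ / 2)
            ≤ ∑ t ∈ Finset.Icc 1 n, ((Dfun M (t - 1) ω : ℕ) : ℝ≥0∞)} := by
    intro ω hω
    simp only [Set.mem_setOf_eq] at hω
    have habs : ∀ t ∈ Finset.Icc 1 n,
        |(if M.X t ω = M.X (t - 1) ω then (1 : ℝ) else 0) - Yf M t ω|
          ≤ ((Dfun M (t - 1) ω : ℕ) : ℝ) := by
      intro t ht
      have ht1 : t - 1 + 1 = t := by simp only [Finset.mem_Icc] at ht; omega
      have h := abs_ind_le M (t - 1) ω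
      rw [ht1] at h
      exact h
    have h1 : |(∑ t ∈ Finset.Icc 1 n, if M.X t ω = M.X (t - 1) ω then (1 : ℝ) else 0)
          - ∑ t ∈ Finset.Icc 1 n, Yf M t ω|
        ≤ ∑ t ∈ Finset.Icc 1 n, ((Dfun M (t - 1) ω : ℕ) : ℝ) := by
      rw [← Finset.sum_sub_distrib]
      exact (Finset.abs_sum_le_sum_abs _ _).trans (Finset.sum_le_sum habs)
    have h2 : (n : ℝ) * δ ≤ |(∑ t ∈ Finset.Icc 1 n,
        if M.X t ω = M.X (t - 1) ω then (1 : ℝ) else 0) - (n : ℝ) * (G 0).toReal| := by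
      have hrw : (1 / (n : ℝ)) * (∑ t ∈ Finset.Icc 1 n,
            if M.X t ω = M.X (t - 1) ω then (1 : ℝ) else 0) - (G 0).toReal
          = ((∑ t ∈ Finset.Icc 1 n, if M.X t ω = M.X (t - 1) ω then (1 : ℝ) else 0)
              - (n : ℝ) * (G 0).toReal) / n := by
        field_simp
      rw [hrw, abs_div, abs_of_pos hnpos] at hω
      have := (le_div_iff₀ hnpos).mp hω
      linarith
    have h3 : |(∑ t ∈ Finset.Icc 1 n, if M.X t ω = M.X (t - 1) ω then (1 : ℝ) else 0)
          - (n : ℝ) * (G 0).toReal|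
        ≤ |(∑ t ∈ Finset.Icc 1 n, if M.X t ω = M.X (t - 1) ω then (1 : ℝ) else 0)
            - ∑ t ∈ Finset.Icc 1 n, Yf M t ω|
          + |(∑ t ∈ Finset.Icc 1 n, Yf M t ω) - (n : ℝ) * (G 0).toReal| :=
      abs_sub_le _ _ _
    rcases le_or_gt ((n : ℝ) * δ / 2)
        (|(∑ t ∈ Finset.Icc 1 n, Yf M t ω) - (n : ℝ) * (G 0).toReal|) with hc | hc
    · refine Or.inl ?_
      show (n : ℝ) * δ / 2 ≤ _
      rw [hSint]
      simpa only [Finset.sum_apply] using hc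
    · refine Or.inr ?_
      have h4 : (n : ℝ) * δ / 2 ≤ ∑ t ∈ Finset.Icc 1 n, ((Dfun M (t - 1) ω : ℕ) : ℝ) := by
        linarith
      show ENNReal.ofReal ((n : ℝ) * δ / 2) ≤ _
      calc ENNReal.ofReal ((n : ℝ) * δ / 2)
          ≤ ENNReal.ofReal (∑ t ∈ Finset.Icc 1 n, ((Dfun M (t - 1) ω : ℕ) : ℝ)) :=
            ENNReal.ofReal_le_ofReal h4
        _ = ∑ t ∈ Finset.Icc 1 n, ((Dfun M (t - 1) ω : ℕ) : ℝ≥0∞) := by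
            rw [ENNReal.ofReal_sum_of_nonneg (fun t _ => Nat.cast_nonneg _)]
            exact Finset.sum_congr rfl fun t _ => ENNReal.ofReal_natCast _
  -- putting everything together
  have hb1 : 0 ≤ (n : ℝ) / ((n : ℝ) * δ / 2) ^ 2 := by positivity
  have hb2 : 0 ≤ (n : ℝ) * (a * ((n : ℝ) * μG)) / ((n : ℝ) * δ / 2) :=
    div_nonneg (mul_nonneg (Nat.cast_nonneg n)
      (mul_nonneg ha0 (mul_nonneg (Nat.cast_nonneg n) hμG0))) hcpos.le
  refine ENNReal.toReal_le_of_le_ofReal (by linarith) ?_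
  calc P {ω | δ ≤ |(1 / (n : ℝ)) * (∑ t ∈ Finset.Icc 1 n,
        if M.X t ω = M.X (t - 1) ω then (1 : ℝ) else 0) - (G 0).toReal|}
      ≤ P ({ω | (n : ℝ) * δ / 2 ≤
          |(∑ t ∈ Finset.Icc 1 n, Yf M t) ω - P[∑ t ∈ Finset.Icc 1 n, Yf M t]|}
        ∪ {ω | ENNReal.ofReal ((n : ℝ) * δ / 2)
            ≤ ∑ t ∈ Finset.Icc 1 n, ((Dfun M (t - 1) ω : ℕ) : ℝ≥0∞)}) :=
        measure_mono hincl
    _ ≤ P {ω | (n : ℝ) * δ / 2 ≤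
          |(∑ t ∈ Finset.Icc 1 n, Yf M t) ω - P[∑ t ∈ Finset.Icc 1 n, Yf M t]|}
        + P {ω | ENNReal.ofReal ((n : ℝ) * δ / 2)
            ≤ ∑ t ∈ Finset.Icc 1 n, ((Dfun M (t - 1) ω : ℕ) : ℝ≥0∞)} :=
        measure_union_le _ _
    _ ≤ ENNReal.ofReal ((n : ℝ) / ((n : ℝ) * δ / 2) ^ 2)
        + ENNReal.ofReal ((n : ℝ) * (a * ((n : ℝ) * μG)) / ((n : ℝ) * δ / 2)) :=
        add_le_add hcheb hmark
    _ = ENNReal.ofReal ((n : ℝ) / ((n : ℝ) * δ / 2) ^ 2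
        + (n : ℝ) * (a * ((n : ℝ) * μG)) / ((n : ℝ) * δ / 2)) :=
        (ENNReal.ofReal_add hb1 hb2).symm

end INARAux

/-- Consistent estimation of `g(0)` in the nearly unstable INAR(1) model:
`ĝ_n(0) = n⁻¹ ∑_{t=1}^n 1{X_t = X_{t-1}} → g(0)` in probability under
`P_{1-h/n²}`. -/
theorem inar_estimate_g0
    {Ω : ℕ → Type} [∀ n, MeasurableSpace (Ω n)] (P : ∀ n, Measure (Ω n))
    [∀ n, IsProbabilityMeasure (P n)] (h : ℝ) (hh : 0 ≤ h) (G : PMF ℕ)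
    (M : ∀ n, INAR (P n) (1 - h / (n : ℝ) ^ 2) G) (μG σ2 : ℝ)
    (hμ : HasSum (fun k : ℕ => (k : ℝ) * (G k).toReal) μG)
    (hσ : HasSum (fun k : ℕ => ((k : ℝ) - μG) ^ 2 * (G k).toReal) σ2) :
    ∀ δ : ℝ, 0 < δ →
      Filter.Tendsto
        (fun n : ℕ =>
          ((P n) {ω | δ ≤
            |(1 / (n : ℝ)) * (∑ t ∈ Finset.Icc 1 n,
                if (M n).X t ω = (M n).X (t - 1) ω then (1 : ℝ) else 0) -
              (G 0).toReal|}).toReal)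
        Filter.atTop (nhds 0) := by
  intro δ hδ
  have hμG0 : 0 ≤ μG := hμ.nonneg fun k =>
    mul_nonneg (Nat.cast_nonneg k) ENNReal.toReal_nonneg
  have hC : Filter.Tendsto
      (fun n : ℕ => (4 / δ ^ 2 + 2 * h * μG / δ) * (1 / (n : ℝ)))
      Filter.atTop (nhds 0) := by
    simpa using (tendsto_one_div_atTop_nhds_zero_nat (𝕜 := ℝ)).const_mul (4 / δ ^ 2 + 2 * h * μG / δ)
  refine tendsto_of_tendsto_of_tendsto_of_le_of_le' tendsto_const_nhds hC
    (Filter.Eventually.of_forall fun n => ENNReal.toReal_nonneg) ?_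
  filter_upwards [Filter.eventually_ge_atTop 1] with n hn
  have hnpos : (0 : ℝ) < n := by exact_mod_cast hn
  have ha0 : 0 ≤ h / (n : ℝ) ^ 2 := div_nonneg hh (by positivity)
  have ha : (1 : ℝ≥0∞) - ENNReal.ofReal (1 - h / (n : ℝ) ^ 2)
      ≤ ENNReal.ofReal (h / (n : ℝ) ^ 2) := INARAux.one_sub_ofReal_le ha0
  refine (INARAux.main_bound (M n) hμ hn hδ ha0 ha).trans (le_of_eq ?_)
  have hne : (n : ℝ) ≠ 0 := hnpos.ne'
  have hδne : δ ≠ 0 := hδ.ne'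
  field_simp
  ring
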